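/- If m₂ ≥ 3 is odd, then the rook graph K₂ □ K_{m₂} does not have the Pairing-Hamiltonian property. In particular, the pairing consisting of the m₂ edges joining corresponding vertices of the two copies of K_{m₂} cannot be extended to a Hamiltonian cycle of the complete graph on the vertex set using only rook-graph edges outside the pairing. -/

import Mathlib

open SimpleGraph

/-- A graph `G` has the Pairing-Hamiltonian property if every pairing `M` of `G`
(i.e. perfect matching of the complete graph on `V(G)`) extends to a Hamiltonian
cycle `H` of the complete graph all of whose edges outside `M` are edges of `G`. -/
def HasPH {V : Type} [DecidableEq V] (G : SimpleGraph V) : Prop :=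
  ∀ M : (⊤ : SimpleGraph V).Subgraph, M.IsPerfectMatching →
    ∃ (a : V) (p : (⊤ : SimpleGraph V).Walk a a), p.IsHamiltonianCycle ∧
      (∀ e ∈ M.edgeSet, e ∈ p.edges) ∧
      (∀ e ∈ p.edges, e ∉ M.edgeSet → e ∈ G.edgeSet)

/-- The vertical pairing of `K₂ □ K_m`, matching `(0,j)` with `(1,j)` for each `j`. -/
def verticalPairing (m : ℕ) : ((⊤ : SimpleGraph (Fin 2 × Fin m))).Subgraph where
  verts := Set.univ
  Adj a b := a.1 ≠ b.1 ∧ a.2 = b.2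
  adj_sub := by
    rintro ⟨a1, a2⟩ ⟨b1, b2⟩ ⟨h1, h2⟩
    simp only [top_adj]
    intro h; apply h1; rw [h]
  edge_vert := by intro a b _; trivial
  symm := by constructor; rintro a b ⟨h1, h2⟩; exact ⟨h1.symm, h2.symm⟩

lemma fin2_cases : ∀ i : Fin 2, i = 0 ∨ i = 1 := by decide

lemma fin2_add_one_ne : ∀ i : Fin 2, i + 1 ≠ i := by decide

lemma fin2_ne_eq : ∀ i j : Fin 2, i ≠ j → j = i + 1 := by decide

lemma filter_card_eq_countP {α : Type} [DecidableEq α] (L : List α) (h : L.Nodup)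
    (P : α → Prop) [DecidablePred P] :
    ((⟨(L : Multiset α), h⟩ : Finset α).filter P).card = L.countP (fun a => P a) := by
  simp [Finset.filter, Finset.card, Multiset.countP_eq_card_filter,
    List.countP_eq_length_filter]

/-- For odd `m₂ ≥ 3`, the rook graph `K₂ □ K_{m₂}` does not have the PH-property;
in particular the vertical pairing cannot be extended to a Hamiltonian cycle. -/
theorem rook_two_odd_not_PH (m : ℕ) (hm : 3 ≤ m) (hodd : Odd m) :
    ¬ HasPH ((⊤ : SimpleGraph (Fin 2)) □ (⊤ : SimpleGraph (Fin m))) ∧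
    ¬ ∃ (a : Fin 2 × Fin m) (p : (⊤ : SimpleGraph (Fin 2 × Fin m)).Walk a a),
        p.IsHamiltonianCycle ∧
        (∀ e ∈ (verticalPairing m).edgeSet, e ∈ p.edges) ∧
        (∀ e ∈ p.edges, e ∉ (verticalPairing m).edgeSet →
          e ∈ ((⊤ : SimpleGraph (Fin 2)) □ (⊤ : SimpleGraph (Fin m))).edgeSet) := by
  classical
  have key : ¬ ∃ (a : Fin 2 × Fin m) (p : (⊤ : SimpleGraph (Fin 2 × Fin m)).Walk a a),
      p.IsHamiltonianCycle ∧
      (∀ e ∈ (verticalPairing m).edgeSet, e ∈ p.edges) ∧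
      (∀ e ∈ p.edges, e ∉ (verticalPairing m).edgeSet →
        e ∈ ((⊤ : SimpleGraph (Fin 2)) □ (⊤ : SimpleGraph (Fin m))).edgeSet) := by
    rintro ⟨a, p, hpc, hMp, hpG⟩
    have ht : p.IsTrail := hpc.isCycle.isCircuit.isTrail
    have hnodup : p.edges.Nodup := ht.edges_nodup
    have heven : ∀ x : Fin 2 × Fin m, Even (p.edges.countP fun e => x ∈ e) := fun x =>
      (ht.even_countP_edges_iff x).mpr (fun h => absurd rfl h)
    set E : Finset (Sym2 (Fin 2 × Fin m)) := (⟨(p.edges : Multiset (Sym2 (Fin 2 × Fin m))), hnodup⟩ : Finset (Sym2 (Fin 2 × Fin m))) with hE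
    have hEmem : ∀ e : Sym2 (Fin 2 × Fin m), e ∈ E ↔ e ∈ p.edges := by
      intro e; rw [hE]; exact Multiset.mem_coe
    set w : Sym2 (Fin 2 × Fin m) → ℕ :=
      fun e => (Finset.univ.filter fun j : Fin m => ((0 : Fin 2), j) ∈ e).card with hw
    -- Step A : the total incidence count of row 0 is even
    have hTeven : Even (∑ e ∈ E, w e) := by
      have h1 : ∑ e ∈ E, w e
          = ∑ j : Fin m, (E.filter fun e => ((0 : Fin 2), j) ∈ e).card := by
        simp only [hw, Finset.card_filter]
        exact Finset.sum_comm
      rw [h1]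
      refine Finset.sum_induction _ Even (fun a b => Even.add) Even.zero (fun j _ => ?_)
      rw [hE, filter_card_eq_countP p.edges hnodup]
      exact heven _
    -- Step B : evaluate the total directly
    have hvertE : E.filter (fun e => e ∈ (verticalPairing m).edgeSet)
        = Finset.image (fun j : Fin m => s(((0 : Fin 2), j), ((1 : Fin 2), j)))
            Finset.univ := by
      ext e
      induction e using Sym2.ind with
      | _ x y =>
        simp only [Finset.mem_filter, Finset.mem_image, Finset.mem_univ, true_and]
        constructor
        · rintro ⟨heE, hv⟩
          rw [Subgraph.mem_edgeSet] at hv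
          obtain ⟨h1, h2⟩ := hv
          rcases fin2_cases x.1 with hx | hx
          · rcases fin2_cases y.1 with hy | hy
            · exact absurd (hx.trans hy.symm) h1
            · refine ⟨x.2, ?_⟩
              have hx' : ((0 : Fin 2), x.2) = x := Prod.ext hx.symm rfl
              have hy' : ((1 : Fin 2), x.2) = y := Prod.ext hy.symm h2
              rw [hx', hy']
          · rcases fin2_cases y.1 with hy | hy
            · refine ⟨y.2, ?_⟩
              have hy' : ((0 : Fin 2), y.2) = y := Prod.ext hy.symm rfl
              have hx' : ((1 : Fin 2), y.2) = x := Prod.ext hx.symm h2.symm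
              rw [hx', hy', Sym2.eq_swap]
            · exact absurd (hx.trans hy.symm) h1
        · rintro ⟨j, hj⟩
          have hMe : s(((0 : Fin 2), j), ((1 : Fin 2), j)) ∈ (verticalPairing m).edgeSet := by
            refine Subgraph.mem_edgeSet.mpr ⟨?_, rfl⟩
            show (0 : Fin 2) ≠ 1
            decide
          rw [← hj]
          exact ⟨(hEmem _).mpr (hMp _ hMe), hMe⟩
    have himinj : ∀ a ∈ Finset.univ, ∀ b ∈ Finset.univ,
        (fun j : Fin m => s(((0 : Fin 2), j), ((1 : Fin 2), j))) a
          = (fun j : Fin m => s(((0 : Fin 2), j), ((1 : Fin 2), j))) b → a = b := by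
      intro a _ b _ hab
      have hab' : s(((0 : Fin 2), a), ((1 : Fin 2), a))
          = s(((0 : Fin 2), b), ((1 : Fin 2), b)) := hab
      have hmem : ((0 : Fin 2), a) ∈ s(((0 : Fin 2), b), ((1 : Fin 2), b)) :=
        hab' ▸ Sym2.mem_mk_left _ _
      rcases Sym2.mem_iff.mp hmem with h | h
      · exact (Prod.ext_iff.mp h).2
      · exact absurd (Prod.ext_iff.mp h).1 (show ¬ (0 : Fin 2) = 1 by decide)
    have hsum_vert : ∑ e ∈ E.filter (fun e => e ∈ (verticalPairing m).edgeSet), w e = m := by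
      rw [hvertE, Finset.sum_image himinj]
      have hwone : ∀ j : Fin m, w s(((0 : Fin 2), j), ((1 : Fin 2), j)) = 1 := by
        intro j
        have hfil : (Finset.univ.filter fun j' : Fin m =>
            ((0 : Fin 2), j') ∈ s(((0 : Fin 2), j), ((1 : Fin 2), j))) = {j} := by
          ext j'
          simp [Sym2.mem_iff, Prod.ext_iff, Fin.ext_iff]
        simp only [hw, hfil, Finset.card_singleton]
      simp [hwone]
    have hsum_horiz : Even (∑ e ∈ E.filter (fun e => ¬ e ∈ (verticalPairing m).edgeSet), w e) := by
      refine Finset.sum_induction _ Even (fun a b => Even.add) Even.zero (fun e he => ?_)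
      rw [Finset.mem_filter] at he
      obtain ⟨heE, hnv⟩ := he
      have heG := hpG e ((hEmem e).mp heE) hnv
      induction e using Sym2.ind with
      | _ x y =>
        rw [mem_edgeSet, boxProd_adj] at heG
        simp only [top_adj] at heG
        rcases heG with ⟨h1, h2⟩ | ⟨h1, h2⟩
        · exact absurd (Subgraph.mem_edgeSet.mpr
            (show (verticalPairing m).Adj x y from ⟨h1, h2⟩)) hnv
        · rcases fin2_cases x.1 with hx | hx
          · have hy : y.1 = 0 := h2 ▸ hx
            have hfil : (Finset.univ.filter fun j : Fin m =>
                ((0 : Fin 2), j) ∈ s(x, y)) = {x.2, y.2} := by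
              ext j'
              simp [Sym2.mem_iff, Prod.ext_iff, hx, hy, eq_comm]
            simp only [hw, hfil]
            rw [Finset.card_pair h1]
            exact ⟨1, rfl⟩
          · have hy : y.1 = 1 := h2 ▸ hx
            have hfil : (Finset.univ.filter fun j : Fin m =>
                ((0 : Fin 2), j) ∈ s(x, y)) = ∅ := by
              ext j'
              simp [Sym2.mem_iff, Prod.ext_iff, hx, hy, Fin.ext_iff]
            simp only [hw, hfil, Finset.card_empty]
            exact Even.zero
    rw [← Finset.sum_filter_add_sum_filter_not E
      (fun e => e ∈ (verticalPairing m).edgeSet) w, hsum_vert, Nat.even_add] at hTeven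
    have hme : Even m := hTeven.mpr hsum_horiz
    rcases hodd with ⟨k, hk⟩
    rcases hme with ⟨l, hl⟩
    omega
  refine ⟨fun hPH => key ?_, key⟩
  have hpm : (verticalPairing m).IsPerfectMatching := by
    constructor
    · intro v _
      refine ⟨(v.1 + 1, v.2), ⟨(fin2_add_one_ne v.1).symm, rfl⟩, ?_⟩
      rintro ⟨w1, w2⟩ ⟨h1, h2⟩
      exact Prod.ext (fin2_ne_eq v.1 w1 h1) h2.symm
    · intro v
      exact Set.mem_univ v
  exact hPH (verticalPairing m) hpm
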